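/- Let p be a prime number, let R = ℤ_p[[X,Y]] be the ring of formal power series in two variables over ℤ_p, and let M be a finitely generated pseudo-null R-module. Let f ∈ R be a prime element. Then the submodule M[f] = {m ∈ M : f·m = 0} (the kernel of multiplication by f on M) is a torsion module over the integral domain R/(f); that is, every element of M[f] is annihilated by some nonzero element of R/(f). -/

import Mathlib

/-- A finitely generated module `M` over a commutative ring `R` is *pseudo-null*
if its localization at every prime ideal of height at most `1` vanishes. -/
def IsPseudoNull (R : Type*) [CommRing R] (M : Type*) [AddCommGroup M] [Module R M] : Prop :=
  ∀ (P : Ideal R) (hP : P.IsPrime),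
    Order.height (⟨P, hP⟩ : PrimeSpectrum R) ≤ 1 →
      Subsingleton (LocalizedModule P.primeCompl M)

private lemma degree_add' (a b : Fin 2 →₀ ℕ) :
    (a + b).degree = a.degree + b.degree := by
  simp [Finsupp.degree_eq_weight_one, map_add]

/-- The divisibility condition: all coefficients of `g` of degree `d` are
divisible by `p ^ (n - d)`. -/
private def Dp (p : ℕ) [Fact p.Prime] (n : ℕ) (g : MvPowerSeries (Fin 2) ℤ_[p]) : Prop :=
  ∀ e : Fin 2 →₀ ℕ, (p : ℤ_[p]) ^ (n - e.degree) ∣ MvPowerSeries.coeff e g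

private lemma Dp_zero (p : ℕ) [Fact p.Prime] (g : MvPowerSeries (Fin 2) ℤ_[p]) :
    Dp p 0 g := by
  intro e
  simp

private lemma Dp_mul {p : ℕ} [Fact p.Prime] {n m : ℕ} {g h : MvPowerSeries (Fin 2) ℤ_[p]}
    (hg : Dp p n g) (hh : Dp p m h) : Dp p (n + m) (g * h) := by
  intro e
  rw [MvPowerSeries.coeff_mul]
  refine Finset.dvd_sum fun x hx => ?_
  replace hx : x.1 + x.2 = e := by simpa using hx
  have h1 : (p : ℤ_[p]) ^ ((n - x.1.degree) + (m - x.2.degree)) ∣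
      MvPowerSeries.coeff x.1 g * MvPowerSeries.coeff x.2 h := by
    rw [pow_add]
    exact mul_dvd_mul (hg x.1) (hh x.2)
  refine dvd_trans (pow_dvd_pow _ ?_) h1
  have : e.degree = x.1.degree + x.2.degree := by rw [← hx, degree_add']
  omega

private lemma Dp_one_of_not_isUnit {p : ℕ} [Fact p.Prime] {f : MvPowerSeries (Fin 2) ℤ_[p]}
    (hfu : ¬ IsUnit f) : Dp p 1 f := by
  intro e
  rcases Nat.eq_zero_or_pos e.degree with he | he
  · have he0 : e = 0 := (Finsupp.degree_eq_zero_iff e).mp he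
    have hcu : ¬ IsUnit (MvPowerSeries.constantCoeff f) := by
      intro h
      exact hfu (MvPowerSeries.isUnit_iff_constantCoeff.mpr h)
    have hmem : MvPowerSeries.constantCoeff f ∈ IsLocalRing.maximalIdeal ℤ_[p] :=
      hcu
    rw [PadicInt.maximalIdeal_eq_span_p, Ideal.mem_span_singleton] at hmem
    simpa [he0, map_zero] using hmem
  · have : 1 - e.degree = 0 := by omega
    rw [this, pow_zero]
    exact one_dvd _

private lemma Dp_pow {p : ℕ} [Fact p.Prime] {f : MvPowerSeries (Fin 2) ℤ_[p]}
    (hfu : ¬ IsUnit f) : ∀ n, Dp p n (f ^ n) := by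
  intro n
  induction n with
  | zero => exact Dp_zero p _
  | succ n ih =>
    have := Dp_mul ih (Dp_one_of_not_isUnit hfu)
    rwa [← pow_succ] at this

/-- An element of `ℤ_[p]` divisible by all powers of `p` is zero. -/
private lemma padic_eq_zero_of_dvd {p : ℕ} [hp : Fact p.Prime] {x : ℤ_[p]}
    (h : ∀ n : ℕ, (p : ℤ_[p]) ^ n ∣ x) : x = 0 := by
  have hnorm : ∀ n : ℕ, ‖x‖ ≤ ((p : ℝ)⁻¹) ^ n := by
    intro n
    obtain ⟨c, hc⟩ := h n
    calc ‖x‖ = ‖(p : ℤ_[p]) ^ n‖ * ‖c‖ := by rw [hc, norm_mul]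
    _ ≤ ‖(p : ℤ_[p]) ^ n‖ * 1 := by
        exact mul_le_mul_of_nonneg_left (PadicInt.norm_le_one c) (norm_nonneg _)
    _ = ((p : ℝ)⁻¹) ^ n := by
        rw [mul_one, PadicInt.norm_p_pow, zpow_neg, zpow_natCast, inv_pow]
  have hp1 : (1 : ℝ) < (p : ℝ) := by exact_mod_cast hp.out.one_lt
  have htend : Filter.Tendsto (fun n : ℕ => ((p : ℝ)⁻¹) ^ n) Filter.atTop (nhds 0) := by
    apply tendsto_pow_atTop_nhds_zero_of_lt_one
    · positivity
    · rw [inv_lt_one_iff₀]; right; exact hp1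
  have : ‖x‖ ≤ 0 := ge_of_tendsto htend (Filter.Eventually.of_forall hnorm)
  have : ‖x‖ = 0 := le_antisymm this (norm_nonneg _)
  exact norm_eq_zero.mp this

/-- A power series divisible by all powers of a non-unit is zero. -/
private lemma eq_zero_of_forall_pow_dvd {p : ℕ} [Fact p.Prime]
    {f a : MvPowerSeries (Fin 2) ℤ_[p]} (hfu : ¬ IsUnit f)
    (h : ∀ n : ℕ, f ^ n ∣ a) : a = 0 := by
  ext e
  rw [map_zero]
  apply padic_eq_zero_of_dvd (p := p)
  intro n
  obtain ⟨b, hb⟩ := h (n + e.degree)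
  have hD : Dp p (n + e.degree) a := by
    rw [hb]
    have := Dp_mul (Dp_pow hfu (n + e.degree)) (Dp_zero p b)
    simpa using this
  have := hD e
  have heq : n + e.degree - e.degree = n := by omega
  rwa [heq] at this

/-- Any prime strictly below a principal prime `(f)` in `Spec ℤ_[p]⟦X,Y⟧` is minimal. -/
private lemma isMin_of_lt_span {p : ℕ} [Fact p.Prime] {f : MvPowerSeries (Fin 2) ℤ_[p]}
    (hf : Prime f) (hfI : (Ideal.span {f}).IsPrime)
    (Q : PrimeSpectrum (MvPowerSeries (Fin 2) ℤ_[p]))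
    (hQ : Q < (⟨Ideal.span {f}, hfI⟩ : PrimeSpectrum (MvPowerSeries (Fin 2) ℤ_[p]))) :
    IsMin Q := by
  have hle : Q.asIdeal ≤ Ideal.span {f} :=
    (PrimeSpectrum.asIdeal_le_asIdeal _ _).mpr hQ.le
  have hfQ : f ∉ Q.asIdeal := by
    intro hmem
    have hspan : Ideal.span {f} ≤ Q.asIdeal := by
      rwa [Ideal.span_singleton_le_iff_mem]
    exact hQ.ne (PrimeSpectrum.ext (le_antisymm hle hspan))
  have hbot : Q.asIdeal = ⊥ := by
    rw [eq_bot_iff]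
    intro a ha
    have hdvd : ∀ n : ℕ, f ^ n ∣ a := by
      intro n
      induction n with
      | zero => simp only [pow_zero]; exact one_dvd a
      | succ n ih =>
        obtain ⟨b, hb⟩ := ih
        have hbQ : b ∈ Q.asIdeal := by
          rcases Q.isPrime.mem_or_mem (hb ▸ ha) with h | h
          · exact absurd (Q.isPrime.mem_of_pow_mem n h) hfQ
          · exact h
        obtain ⟨c, hc⟩ := Ideal.mem_span_singleton.mp (hle hbQ)
        exact ⟨c, by rw [hb, hc, pow_succ]; ring⟩
    have := eq_zero_of_forall_pow_dvd hf.not_unit hdvd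
    simp [this]
  intro z hz
  have : z.asIdeal ≤ Q.asIdeal := (PrimeSpectrum.asIdeal_le_asIdeal _ _).mpr hz
  rw [← PrimeSpectrum.asIdeal_le_asIdeal, hbot]
  exact bot_le

/-- Let `R = ℤ_p[[X, Y]]`, let `M` be a finitely generated
pseudo-null `R`-module and let `f ∈ R` be a prime element.  Then the kernel
`M[f]` of multiplication by `f` on `M` is a torsion module over `R/(f)`:
every `x ∈ M` with `f • x = 0` is annihilated by some element of `R` that is
nonzero modulo `(f)`. -/
theorem stmt4 (p : ℕ) [Fact p.Prime]
    (M : Type) [AddCommGroup M] [Module (MvPowerSeries (Fin 2) ℤ_[p]) M]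
    [Module.Finite (MvPowerSeries (Fin 2) ℤ_[p]) M]
    (hM : IsPseudoNull (MvPowerSeries (Fin 2) ℤ_[p]) M)
    (f : MvPowerSeries (Fin 2) ℤ_[p]) (hf : Prime f) :
    ∀ x : M, f • x = 0 →
      ∃ r : MvPowerSeries (Fin 2) ℤ_[p], r ∉ Ideal.span {f} ∧ r • x = 0 := by
  intro x _
  have hfI : (Ideal.span {f}).IsPrime := (Ideal.span_singleton_prime hf.ne_zero).mpr hf
  have hht : Order.height
      (⟨Ideal.span {f}, hfI⟩ : PrimeSpectrum (MvPowerSeries (Fin 2) ℤ_[p])) ≤ 1 := by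
    have h1 : Order.height
        (⟨Ideal.span {f}, hfI⟩ : PrimeSpectrum (MvPowerSeries (Fin 2) ℤ_[p])) ≤ (1 : ℕ) := by
      rw [Order.height_le_coe_iff]
      intro y hy
      have : Order.height y = 0 := Order.height_eq_zero.mpr (isMin_of_lt_span hf hfI y hy)
      rw [this]
      exact_mod_cast zero_lt_one
    exact_mod_cast h1
  have hsub : Subsingleton (LocalizedModule (Ideal.span {f}).primeCompl M) :=
    hM (Ideal.span {f}) hfI hht
  have h := Subsingleton.elim
    (LocalizedModule.mk x (1 : (Ideal.span {f}).primeCompl))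
    (LocalizedModule.mk (0 : M) 1)
  rw [LocalizedModule.mk_eq] at h
  obtain ⟨u, hu⟩ := h
  refine ⟨(u : MvPowerSeries (Fin 2) ℤ_[p]), u.2, ?_⟩
  simpa [Submonoid.smul_def] using hu
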